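/- Let 𝒢′ = {G′_n} be a graph sequence; call a vertex of G′_n terminal if it has degree 1, and suppose that deleting all terminal vertices from each G′_n yields a graph sequence 𝒢 = {G_n} (in particular each graph G_n is connected). Then for every ε > 0 there exists a graph sequence 𝒢′_ε such that: (1) 𝒢′_ε ≃ 𝒢′; (2) e(𝒢′_ε) ≤ c(𝒢′) + ε; and (3) whenever a pair (x,y) is an edge of 𝒢′_ε but not of 𝒢′, or an edge of 𝒢′ but not of 𝒢′_ε, then both x and y are non-terminal vertices of 𝒢′ (i.e. vertices of 𝒢). -/

import Mathlib

open Filter Topology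

/-- A graph sequence: finite connected graphs of uniformly bounded degree whose
number of vertices tends to infinity. -/
structure GraphSeq (V : ℕ → Type*) where
  G : ∀ n, SimpleGraph (V n)
  finite : ∀ n, Finite (V n)
  connected : ∀ n, (G n).Connected
  degBound : ℕ
  deg_le : ∀ n, ∀ x : V n, ((G n).neighborSet x).ncard ≤ degBound
  card_tendsto : Tendsto (fun n => Nat.card (V n)) atTop atTop

/-- The edge number `e(𝒢) = liminf |E(G_n)|/|V(G_n)|`. -/
noncomputable def GraphSeq.edgeNumber {V : ℕ → Type*} (Gs : GraphSeq V) : ℝ :=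
  liminf (fun n => (((Gs.G n).edgeSet.ncard : ℝ)) / (Nat.card (V n) : ℝ)) atTop

/-- Bi-Lipschitz equivalence `𝒢 ≃ ℋ` of graph sequences on the same vertex sets. -/
def GraphSeq.equivSeq {V : ℕ → Type*} (Gs Hs : GraphSeq V) : Prop :=
  ∃ L : ℕ, 0 < L ∧ ∀ n, ∀ x y : V n,
    (Hs.G n).dist x y ≤ L * (Gs.G n).dist x y ∧
    (Gs.G n).dist x y ≤ L * (Hs.G n).dist x y

/-- The (combinatorial) cost `c(𝒢) = inf { e(ℋ) : ℋ ≃ 𝒢 }`. -/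
noncomputable def GraphSeq.cost {V : ℕ → Type*} (Gs : GraphSeq V) : ℝ :=
  sInf { x : ℝ | ∃ Hs : GraphSeq V, Gs.equivSeq Hs ∧ x = Hs.edgeNumber }

/-- Coarse equivalence of graph sequences: a uniform `(A,A)`-quasi-isometry levelwise. -/
def coarseEquiv {V W : ℕ → Type*} (Gs : GraphSeq V) (Hs : GraphSeq W) : Prop :=
  ∃ A : ℝ, 0 < A ∧ ∀ n, ∃ f : V n → W n,
    (∀ x y : V n,
      ((Gs.G n).dist x y : ℝ) / A - A ≤ ((Hs.G n).dist (f x) (f y) : ℝ) ∧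
      ((Hs.G n).dist (f x) (f y) : ℝ) ≤ A * ((Gs.G n).dist x y : ℝ) + A) ∧
    (∀ w : W n, ∃ x : V n, ((Hs.G n).dist (f x) w : ℝ) ≤ A)

/-- Hyperfiniteness of a family of graphs. -/
def hyperfiniteFam {V : ℕ → Type*} (G : ∀ n, SimpleGraph (V n)) : Prop :=
  ∀ ε : ℝ, 0 < ε → ∃ K : ℕ, 0 < K ∧ ∃ E : ∀ n, Set (Sym2 (V n)),
    (∀ n, E n ⊆ (G n).edgeSet) ∧
    limsup (fun n => (((E n).ncard : ℝ)) / (Nat.card (V n) : ℝ)) atTop < ε ∧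
    ∀ n, ∀ x : V n, {y | ((G n).deleteEdges (E n)).Reachable x y}.ncard ≤ K

def GraphSeq.hyperfinite {V : ℕ → Type*} (Gs : GraphSeq V) : Prop :=
  hyperfiniteFam Gs.G

/-- Property A for a family of graphs. -/
def propertyAFam {V : ℕ → Type*} (G : ∀ n, SimpleGraph (V n)) : Prop :=
  ∀ ε : ℝ, 0 < ε → ∃ S : ℕ, 0 < S ∧ ∀ n, ∃ ξ : V n → V n → ℝ,
    (∀ x, ∑ᶠ y, |ξ x y| = 1) ∧
    (∀ x y, ξ x y ≠ 0 → (G n).dist x y ≤ S) ∧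
    (∀ x y, (G n).Adj x y → ∑ᶠ z, |ξ x z - ξ y z| < ε)

def GraphSeq.propertyA {V : ℕ → Type*} (Gs : GraphSeq V) : Prop :=
  propertyAFam Gs.G

/-- Property almost-A: one may delete a vanishing proportion of vertices to get property A. -/
def GraphSeq.almostA {V : ℕ → Type*} (Gs : GraphSeq V) : Prop :=
  ∃ V' : ∀ n, Set (V n),
    Tendsto (fun n => (((V' n).ncard : ℝ)) / (Nat.card (V n) : ℝ)) atTop (𝓝 0) ∧
    propertyAFam (fun n => (Gs.G n).induce ((V' n)ᶜ))

/-- The set of edges of `G` with exactly one endpoint in `F`. -/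
def edgeBoundary {V : Type*} (G : SimpleGraph V) (F : Set V) : Set (Sym2 V) :=
  {e | e ∈ G.edgeSet ∧ ∃ x y, e = s(x, y) ∧ x ∈ F ∧ y ∉ F}

/-- The Cayley graph of a group with respect to a set `S`. -/
def cayleyGraph (Γ : Type*) [Group Γ] (S : Set Γ) : SimpleGraph Γ :=
  SimpleGraph.fromRel (fun x y => ∃ s ∈ S, y = x * s)

/-- The simple graph underlying an `S`-labelled graph given by label maps `lab`. -/
def labGraph {Γ V : Type*} (S : Set Γ) (lab : Γ → V → V) : SimpleGraph V :=
  SimpleGraph.fromRel (fun x y => ∃ s ∈ S, y = lab s x)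

/-- Right multiplication by `s` on the right cosets of `H`. -/
def schreierMul {Γ : Type*} [Group Γ] (H : Subgroup Γ) (s : Γ) :
    Quotient (QuotientGroup.rightRel H) → Quotient (QuotientGroup.rightRel H) :=
  Quotient.map (fun g => g * s) (fun a b hab => by
    have h := (QuotientGroup.rightRel_apply).mp hab
    exact (QuotientGroup.rightRel_apply).mpr (by
      simpa [mul_assoc] using h))

/-- The Schreier graph `Sch(Γ, H, S)` on the right cosets of `H`. -/
def schreierGraph {Γ : Type*} [Group Γ] (H : Subgroup Γ) (S : Set Γ) :
    SimpleGraph (Quotient (QuotientGroup.rightRel H)) :=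
  labGraph S (fun s => schreierMul H s)

/-- The rooted labelled `r`-ball of the labelled graph `lab` at `x` is isomorphic to
the `r`-ball around the identity in `Cay(Γ, S)`. -/
def ballIso {Γ : Type*} [Group Γ] (S : Set Γ) {V : Type*} (lab : Γ → V → V)
    (x : V) (r : ℕ) : Prop :=
  ∃ f : Γ → V, f 1 = x ∧
    (∀ g g' : Γ, (cayleyGraph Γ S).dist 1 g ≤ r → (cayleyGraph Γ S).dist 1 g' ≤ r →
      f g = f g' → g = g') ∧
    (∀ g : Γ, (cayleyGraph Γ S).dist 1 g < r → ∀ s ∈ S, f (g * s) = lab s (f g)) ∧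
    (∀ v : V, (labGraph S lab).dist x v ≤ r →
      ∃ g : Γ, (cayleyGraph Γ S).dist 1 g ≤ r ∧ f g = v)

/-- Benjamini–Schramm convergence of the `S`-labelled graphs given by `lab` to `Cay(Γ, S)`. -/
def BSConv {Γ : Type*} [Group Γ] (S : Set Γ) {V : ℕ → Type*}
    (lab : ∀ n, Γ → V n → V n) : Prop :=
  ∀ r : ℕ, Tendsto
    (fun n => ((Nat.card {x : V n // ballIso S (lab n) x r} : ℝ)) / (Nat.card (V n) : ℝ))
    atTop (𝓝 1)

/-- A sofic approximation of `Γ`: a graph sequence labelled by `S` which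
Benjamini–Schramm converges to `Cay(Γ, S)`. -/
def IsSoficApprox {Γ : Type*} [Group Γ] (S : Set Γ) {V : ℕ → Type*} (Gs : GraphSeq V)
    (lab : ∀ n, Γ → V n → V n) : Prop :=
  (∀ n, Gs.G n = labGraph S (lab n)) ∧ BSConv S lab

/-- Amenability via Følner sets with respect to the generating set `S`. -/
def FolnerAmenable {Γ : Type*} [Group Γ] (S : Set Γ) : Prop :=
  ∀ ε : ℝ, 0 < ε → ∃ F : Set Γ, F.Finite ∧ F.Nonempty ∧
    ∀ g ∈ S, ((symmDiff ((fun x => g * x) '' F) F).ncard : ℝ) < ε * (F.ncard : ℝ)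

section helpers
variable {V : Type*}

lemma reach_dist_triangle (G : SimpleGraph V) {u v w : V} (h1 : G.Reachable u v)
    (h2 : G.Reachable v w) : G.dist u w ≤ G.dist u v + G.dist v w := by
  obtain ⟨p, hp⟩ := h1.exists_walk_length_eq_dist
  obtain ⟨q, hq⟩ := h2.exists_walk_length_eq_dist
  rw [← hp, ← hq, ← SimpleGraph.Walk.length_append]
  exact SimpleGraph.dist_le _

lemma transfer_walk (A B : SimpleGraph V) (f : V → V) (C : ℕ)
    (h : ∀ a b, A.Adj a b → B.Reachable (f a) (f b) ∧ B.dist (f a) (f b) ≤ C) :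
    ∀ {x y : V} (w : A.Walk x y),
      B.Reachable (f x) (f y) ∧ B.dist (f x) (f y) ≤ C * w.length := by
  intro x y w
  induction w with
  | nil => exact ⟨SimpleGraph.Reachable.refl _, by simp⟩
  | cons hadj w ih =>
    obtain ⟨hr1, hd1⟩ := h _ _ hadj
    obtain ⟨hr2, hd2⟩ := ih
    refine ⟨hr1.trans hr2, ?_⟩
    calc B.dist _ _ ≤ B.dist (f _) (f _) + B.dist (f _) (f _) :=
          reach_dist_triangle B hr1 hr2
      _ ≤ C + C * w.length := add_le_add hd1 hd2
      _ ≤ C * (SimpleGraph.Walk.cons hadj w).length := by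
          simp [SimpleGraph.Walk.length_cons]; ring_nf; omega

lemma transfer_dist (A B : SimpleGraph V) (f : V → V) (C : ℕ)
    (h : ∀ a b, A.Adj a b → B.Reachable (f a) (f b) ∧ B.dist (f a) (f b) ≤ C)
    {x y : V} (hr : A.Reachable x y) :
    B.Reachable (f x) (f y) ∧ B.dist (f x) (f y) ≤ C * A.dist x y := by
  obtain ⟨w, hw⟩ := hr.exists_walk_length_eq_dist
  rw [← hw]
  exact transfer_walk A B f C h w

lemma reach_closed (G : SimpleGraph V) (S : Set V)
    (hS : ∀ a ∈ S, ∀ b, G.Adj a b → b ∈ S) :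
    ∀ {x u : V}, x ∈ S → G.Reachable x u → u ∈ S := by
  intro x u hx h
  obtain ⟨w⟩ := h
  induction w with
  | nil => exact hx
  | cons hadj w ih => exact ih (hS _ hx _ hadj)

end helpers

section helpers2
variable {α β : Type*}

lemma myNcard_biUnion_le {s : Set α} (hs : s.Finite) (t : α → Set β) (k : ℕ)
    (ht : ∀ a, (t a).ncard ≤ k) :
    (⋃ a ∈ s, t a).ncard ≤ s.ncard * k := by
  refine Set.Finite.induction_on s hs (by simp) ?_
  intro a s hnm hfin ih
  rw [Set.biUnion_insert]
  calc ((t a) ∪ ⋃ x ∈ s, t x).ncard ≤ (t a).ncard + (⋃ x ∈ s, t x).ncard :=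
        Set.ncard_union_le _ _
    _ ≤ k + s.ncard * k := add_le_add (ht a) ih
    _ = (insert a s).ncard * k := by
        rw [Set.ncard_insert_of_notMem hnm hfin]; ring

lemma ball_ncard {V : Type*} [Fintype V] (G : SimpleGraph V) (hc : G.Connected) (d : ℕ)
    (hd : ∀ x : V, (G.neighborSet x).ncard ≤ d) (x : V) :
    ∀ r : ℕ, ({y | G.dist x y ≤ r}).ncard ≤ (d + 1) ^ r := by
  intro r
  induction r with
  | zero =>
    have hsub : {y | G.dist x y ≤ 0} ⊆ {x} := by
      intro y hy
      simp only [Set.mem_setOf_eq, Nat.le_zero] at hy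
      exact ((hc.dist_eq_zero_iff).mp hy).symm
    calc ({y | G.dist x y ≤ 0}).ncard ≤ ({x} : Set V).ncard :=
          Set.ncard_le_ncard hsub (Set.toFinite _)
      _ = 1 := Set.ncard_singleton x
      _ ≤ (d+1)^0 := by simp
  | succ r ih =>
    have hsub : {y | G.dist x y ≤ r + 1} ⊆
        ⋃ y ∈ {y | G.dist x y ≤ r}, insert y (G.neighborSet y) := by
      intro z hz
      simp only [Set.mem_setOf_eq] at hz
      by_cases h : G.dist x z ≤ r
      · exact Set.mem_biUnion h (Set.mem_insert _ _)
      · have hdz : G.dist x z = r + 1 := le_antisymm hz (by omega)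
        have hr : G.Reachable x z := hc x z
        obtain ⟨w, hw⟩ := hr.exists_walk_length_eq_dist
        -- look at reverse walk to find predecessor
        cases hw2 : w.reverse with
        | nil =>
          exfalso
          have : w.length = 0 := by
            have := congrArg SimpleGraph.Walk.length hw2
            simpa using this
          omega
        | @cons _ b _ hadj w' =>
          have hlen : w'.length = r := by
            have := congrArg SimpleGraph.Walk.length hw2
            simp [SimpleGraph.Walk.length_cons] at this
            omega
          have hdb : G.dist x b ≤ r := by
            have := SimpleGraph.dist_le w'.reverse
            simpa [hlen, SimpleGraph.dist_comm] using this
          refine Set.mem_biUnion hdb ?_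
          exact Set.mem_insert_of_mem _ (by exact hadj.symm)
    calc ({y | G.dist x y ≤ r + 1}).ncard
        ≤ (⋃ y ∈ {y | G.dist x y ≤ r}, insert y (G.neighborSet y)).ncard :=
          Set.ncard_le_ncard hsub (Set.toFinite _)
      _ ≤ ({y | G.dist x y ≤ r}).ncard * (d + 1) := by
          refine myNcard_biUnion_le (Set.toFinite _) _ _ ?_
          intro a
          calc (insert a (G.neighborSet a)).ncard ≤ (G.neighborSet a).ncard + 1 :=
                Set.ncard_insert_le _ _
            _ ≤ d + 1 := by have := hd a; omega
      _ ≤ (d+1)^r * (d+1) := Nat.mul_le_mul_right _ ih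
      _ = (d+1)^(r+1) := by ring
end helpers2

lemma main_single {V : Type*} [Fintype V] (G' H : SimpleGraph V) (T : Set V)
    (hT : ∀ x, x ∈ T ↔ (G'.neighborSet x).ncard = 1)
    (hTc : Tᶜ.Nonempty)
    (hG' : G'.Connected) (hH : H.Connected)
    (d' : ℕ) (hd' : ∀ x, (G'.neighborSet x).ncard ≤ d')
    (L : ℕ) (hL : 0 < L)
    (hdist : ∀ x y, H.dist x y ≤ L * G'.dist x y ∧ G'.dist x y ≤ L * H.dist x y) :
    ∃ K : SimpleGraph V, K.Connected ∧
      (∀ x y, K.dist x y ≤ (L*(2*L+1)) * G'.dist x y ∧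
        G'.dist x y ≤ (L*(2*L+1)) * K.dist x y) ∧
      K.edgeSet.ncard ≤ H.edgeSet.ncard ∧
      (∀ x, (K.neighborSet x).ncard ≤ (d'+1)^(L*(2*L+1))) ∧
      (∀ x y, ((K.Adj x y ∧ ¬ G'.Adj x y) ∨ (G'.Adj x y ∧ ¬ K.Adj x y)) →
        x ∉ T ∧ y ∉ T) := by
  classical
  -- the unique neighbor of a terminal vertex
  have hpex : ∀ x, x ∈ T → ∃ y, G'.neighborSet x = {y} :=
    fun x hx => Set.ncard_eq_one.mp ((hT x).mp hx)
  let p : V → V := fun x => if hx : x ∈ T then (hpex x hx).choose else x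
  have hpset : ∀ x, x ∈ T → G'.neighborSet x = {p x} := by
    intro x hx
    simp only [p, dif_pos hx]
    exact (hpex x hx).choose_spec
  have hpAdj : ∀ x, x ∈ T → G'.Adj x (p x) := by
    intro x hx
    have : p x ∈ G'.neighborSet x := by rw [hpset x hx]; rfl
    exact this
  have hpUniq : ∀ x, x ∈ T → ∀ z, G'.Adj x z → z = p x := by
    intro x hx z hz
    have : z ∈ G'.neighborSet x := hz
    rw [hpset x hx] at this
    exact this
  have hpT : ∀ x, x ∈ T → p x ∉ T := by
    intro x hx hpx
    obtain ⟨u, hu⟩ := hTc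
    have hxpx : x = p (p x) := hpUniq (p x) hpx x (hpAdj x hx).symm
    have hcl : ∀ a ∈ ({x, p x} : Set V), ∀ b, G'.Adj a b → b ∈ ({x, p x} : Set V) := by
      intro a ha b hb
      rcases ha with rfl | ha
      · right; exact hpUniq a hx b hb
      · simp only [Set.mem_singleton_iff] at ha
        subst ha
        left
        rw [hxpx]
        exact hpUniq (p x) hpx b hb
    have := reach_closed G' _ hcl (Set.mem_insert x _) (hG' x u)
    rcases this with rfl | h
    · exact hu hx
    · simp only [Set.mem_singleton_iff] at h; subst h; exact hu hpx
  have hpdist : ∀ x, x ∈ T → G'.dist x (p x) = 1 :=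
    fun x hx => SimpleGraph.dist_eq_one_iff_adj.mpr (hpAdj x hx)
  -- distance to the complement of T in H
  let D : V → ℕ := fun a => sInf ((fun w => H.dist a w) '' Tᶜ)
  have hDmem : ∀ a, ∃ w, w ∉ T ∧ H.dist a w = D a := by
    intro a
    have hne : ((fun w => H.dist a w) '' Tᶜ).Nonempty := hTc.image _
    obtain ⟨w, hw, hweq⟩ := Nat.sInf_mem hne
    exact ⟨w, hw, hweq⟩
  have hDle : ∀ a w, w ∉ T → D a ≤ H.dist a w := by
    intro a w hw
    exact Nat.sInf_le ⟨w, hw, rfl⟩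
  have hDzero : ∀ a, a ∉ T → D a = 0 := by
    intro a ha
    have := hDle a a ha
    rw [SimpleGraph.dist_self] at this
    omega
  have hDpos : ∀ a, a ∈ T → 0 < D a := by
    intro a ha
    obtain ⟨w, hw, hweq⟩ := hDmem a
    have hne : a ≠ w := fun h => hw (h ▸ ha)
    rw [← hweq]
    exact (hH a w).pos_dist_of_ne hne
  have hDL : ∀ a, D a ≤ L := by
    intro a
    by_cases ha : a ∈ T
    · calc D a ≤ H.dist a (p a) := hDle a (p a) (hpT a ha)
        _ ≤ L * G'.dist a (p a) := (hdist a (p a)).1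
        _ = L := by rw [hpdist a ha]; ring
    · rw [hDzero a ha]; omega
  -- choose a descending neighbor for terminal vertices
  have hnexte : ∀ a, a ∈ T → ∃ b, H.Adj a b ∧ D b < D a := by
    intro a ha
    obtain ⟨w₀, hw₀, hweq⟩ := hDmem a
    have hpos : 0 < H.dist a w₀ := by rw [hweq]; exact hDpos a ha
    obtain ⟨w, hw⟩ := (hH a w₀).exists_walk_length_eq_dist
    cases w with
    | nil => simp at hpos
    | @cons _ b _ hadj w' =>
      refine ⟨b, hadj, ?_⟩
      have hlen : w'.length + 1 = H.dist a w₀ := by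
        simpa [SimpleGraph.Walk.length_cons] using hw
      calc D b ≤ H.dist b w₀ := hDle b w₀ hw₀
        _ ≤ w'.length := SimpleGraph.dist_le w'
        _ < D a := by omega
  let next : V → V := fun a => if ha : a ∈ T then (hnexte a ha).choose else a
  have hnext : ∀ a, a ∈ T → H.Adj a (next a) ∧ D (next a) < D a := by
    intro a ha
    simp only [next, dif_pos ha]
    exact (hnexte a ha).choose_spec
  -- iterate
  let aux : ℕ → V → V := fun k =>
    Nat.rec (fun a => a) (fun _ ih a => if a ∈ T then ih (next a) else a) k
  have haux0 : ∀ a, aux 0 a = a := fun _ => rfl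
  have hauxS : ∀ k a, aux (k+1) a = if a ∈ T then aux k (next a) else a := fun _ _ => rfl
  have hauxnT : ∀ k a, a ∉ T → aux k a = a := by
    intro k a ha
    cases k with
    | zero => rfl
    | succ k => rw [hauxS, if_neg ha]
  have hspec : ∀ k, ∀ a, D a ≤ k →
      (aux k a ∉ T ∧ H.Reachable a (aux k a) ∧ H.dist a (aux k a) ≤ D a ∧
        ∀ k', D a ≤ k' → aux k' a = aux k a) := by
    intro k
    induction k with
    | zero =>
      intro a hk
      have haT : a ∉ T := fun ha => by have := hDpos a ha; omega
      rw [haux0]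
      exact ⟨haT, SimpleGraph.Reachable.refl a, by rw [SimpleGraph.dist_self]; omega,
        fun k' _ => hauxnT k' a haT⟩
    | succ k ih =>
      intro a hk
      by_cases ha : a ∈ T
      · have hnb := hnext a ha
        have hDb : D (next a) ≤ k := by have := hnb.2; omega
        obtain ⟨ih1, ih2, ih3, ih4⟩ := ih (next a) hDb
        rw [hauxS, if_pos ha]
        refine ⟨ih1, hnb.1.reachable.trans ih2, ?_, ?_⟩
        · calc H.dist a (aux k (next a)) ≤ H.dist a (next a) + H.dist (next a) (aux k (next a)) :=
              reach_dist_triangle H hnb.1.reachable ih2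
            _ ≤ 1 + D (next a) := by
                have h1 : H.dist a (next a) = 1 := SimpleGraph.dist_eq_one_iff_adj.mpr hnb.1
                omega
            _ ≤ D a := by have := hnb.2; omega
        · intro k' hk'
          have hDapos : 0 < D a := hDpos a ha
          obtain ⟨k'', rfl⟩ : ∃ k'', k' = k'' + 1 := ⟨k' - 1, by omega⟩
          rw [hauxS, if_pos ha]
          rw [ih4 k'' (by omega)]
      · rw [hauxnT (k+1) a ha]
        exact ⟨ha, SimpleGraph.Reachable.refl a, by rw [SimpleGraph.dist_self]; omega,
          fun k' _ => hauxnT k' a ha⟩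
  let ρ : V → V := fun a => aux (D a) a
  have hρnT : ∀ a, ρ a ∉ T := fun a => (hspec (D a) a le_rfl).1
  have hρreach : ∀ a, H.Reachable a (ρ a) := fun a => (hspec (D a) a le_rfl).2.1
  have hρdist : ∀ a, H.dist a (ρ a) ≤ D a := fun a => (hspec (D a) a le_rfl).2.2.1
  have hρid : ∀ a, a ∉ T → ρ a = a := fun a ha => hauxnT _ a ha
  have hρstep : ∀ a, a ∈ T → ρ a = ρ (next a) := by
    intro a ha
    have hDapos : 0 < D a := hDpos a ha
    have hDb : D (next a) ≤ D a - 1 := by have := (hnext a ha).2; omega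
    show aux (D a) a = aux (D (next a)) (next a)
    obtain ⟨m, hm⟩ : ∃ m, D a = m + 1 := ⟨D a - 1, by omega⟩
    rw [hm, hauxS, if_pos ha]
    exact (hspec (D (next a)) (next a) le_rfl).2.2.2 m (by omega)
  -- the constant
  set C : ℕ := L*(2*L+1) with hCdef
  have hCL : L ≤ C := by
    have h1 : 1 ≤ 2*L+1 := by omega
    calc L = L * 1 := (mul_one L).symm
      _ ≤ L * (2*L+1) := Nat.mul_le_mul_left L h1
  have hC1 : 1 ≤ C := le_trans hL hCL
  -- the inner graph on nonterminal vertices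
  let K : SimpleGraph V := {
    Adj := fun u v => u ≠ v ∧ u ∉ T ∧ v ∉ T ∧ ∃ a b, H.Adj a b ∧ ρ a = u ∧ ρ b = v
    symm := by
      refine ⟨fun u v h => ?_⟩
      obtain ⟨hne, hu, hv, a, b, hab, ha, hb⟩ := h
      exact ⟨hne.symm, hv, hu, b, a, hab.symm, hb, ha⟩
    loopless := ⟨fun u h => h.1 rfl⟩ }
  have hKadj1 : ∀ a b, H.Adj a b → K.Reachable (ρ a) (ρ b) ∧ K.dist (ρ a) (ρ b) ≤ 1 := by
    intro a b hab
    rcases eq_or_ne (ρ a) (ρ b) with h | h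
    · rw [h]
      exact ⟨SimpleGraph.Reachable.refl _, by rw [SimpleGraph.dist_self]; omega⟩
    · have hadj : K.Adj (ρ a) (ρ b) := ⟨h, hρnT a, hρnT b, a, b, hab, rfl, rfl⟩
      exact ⟨hadj.reachable, le_of_eq (SimpleGraph.dist_eq_one_iff_adj.mpr hadj)⟩
  have hKG' : ∀ u v, K.Adj u v → G'.dist u v ≤ C := by
    intro u v h
    obtain ⟨hne, hu, hv, a, b, hab, ha, hb⟩ := h
    have h1 : H.dist u v ≤ 2*L+1 := by
      subst ha
      subst hb
      have r1 : H.Reachable (ρ a) a := (hρreach a).symm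
      have r2 : H.Reachable a (ρ b) := hab.reachable.trans (hρreach b)
      have t1 : H.dist (ρ a) (ρ b) ≤ H.dist (ρ a) a + H.dist a (ρ b) :=
        reach_dist_triangle H r1 r2
      have t2 : H.dist a (ρ b) ≤ H.dist a b + H.dist b (ρ b) :=
        reach_dist_triangle H hab.reachable (hρreach b)
      have e1 : H.dist (ρ a) a ≤ L := by
        rw [SimpleGraph.dist_comm]
        exact le_trans (hρdist a) (hDL a)
      have e2 : H.dist a b = 1 := SimpleGraph.dist_eq_one_iff_adj.mpr hab
      have e3 : H.dist b (ρ b) ≤ L := le_trans (hρdist b) (hDL b)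
      omega
    calc G'.dist u v ≤ L * H.dist u v := (hdist u v).2
      _ ≤ L * (2*L+1) := Nat.mul_le_mul_left L h1
  have hG'K : ∀ x y, x ∉ T → y ∉ T → K.Reachable x y ∧ K.dist x y ≤ L * G'.dist x y := by
    intro x y hx hy
    have htr := transfer_dist H K ρ 1 hKadj1 (hH x y)
    rw [hρid x hx, hρid y hy] at htr
    refine ⟨htr.1, ?_⟩
    calc K.dist x y ≤ 1 * H.dist x y := htr.2
      _ = H.dist x y := one_mul _
      _ ≤ L * G'.dist x y := (hdist x y).1
  -- the modified graph
  let K2 : SimpleGraph V := {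
    Adj := fun x y => ((x ∈ T ∨ y ∈ T) ∧ G'.Adj x y) ∨ (x ∉ T ∧ y ∉ T ∧ K.Adj x y)
    symm := by
      refine ⟨fun x y h => ?_⟩
      rcases h with ⟨h1, h2⟩ | ⟨h1, h2, h3⟩
      · exact Or.inl ⟨h1.symm, h2.symm⟩
      · exact Or.inr ⟨h2, h1, h3.symm⟩
    loopless := by
      refine ⟨fun x h => ?_⟩
      rcases h with ⟨_, h2⟩ | ⟨_, _, h3⟩
      · exact G'.irrefl h2
      · exact K.irrefl h3 }
  have hK2edge : ∀ x y, K2.Adj x y → G'.Reachable x y ∧ G'.dist x y ≤ C := by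
    intro x y h
    refine ⟨hG' x y, ?_⟩
    rcases h with ⟨_, h2⟩ | ⟨_, _, h3⟩
    · rw [SimpleGraph.dist_eq_one_iff_adj.mpr h2]; omega
    · exact hKG' x y h3
  have hKK2 : ∀ a b, K.Adj a b → K2.Reachable a b ∧ K2.dist a b ≤ 1 := by
    intro a b hab
    have hadj : K2.Adj a b := Or.inr ⟨hab.2.1, hab.2.2.1, hab⟩
    exact ⟨hadj.reachable, le_of_eq (SimpleGraph.dist_eq_one_iff_adj.mpr hadj)⟩
  have hG'K2 : ∀ x y, G'.Adj x y → K2.Reachable x y ∧ K2.dist x y ≤ C := by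
    intro x y h
    by_cases hx : x ∈ T ∨ y ∈ T
    · have hadj : K2.Adj x y := Or.inl ⟨hx, h⟩
      refine ⟨hadj.reachable, ?_⟩
      rw [SimpleGraph.dist_eq_one_iff_adj.mpr hadj]; omega
    · push_neg at hx
      obtain ⟨hrxy, hdxy⟩ := hG'K x y hx.1 hx.2
      have htr := transfer_dist K K2 id 1 hKK2 hrxy
      simp only [id] at htr
      refine ⟨htr.1, ?_⟩
      have hd1 : G'.dist x y = 1 := SimpleGraph.dist_eq_one_iff_adj.mpr h
      calc K2.dist x y ≤ 1 * K.dist x y := htr.2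
        _ = K.dist x y := one_mul _
        _ ≤ L * G'.dist x y := hdxy
        _ = L := by rw [hd1]; ring
        _ ≤ C := hCL
  have hK2conn : K2.Connected := by
    rw [SimpleGraph.connected_iff]
    refine ⟨fun x y => ?_, hG'.nonempty⟩
    have := (transfer_dist G' K2 id C hG'K2 (hG' x y)).1
    simpa using this
  have hdistKG : ∀ x y, K2.dist x y ≤ C * G'.dist x y ∧ G'.dist x y ≤ C * K2.dist x y := by
    intro x y
    constructor
    · have := (transfer_dist G' K2 id C hG'K2 (hG' x y)).2
      simpa using this
    · have := (transfer_dist K2 G' id C hK2edge (hK2conn.preconnected x y)).2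
      simpa using this
  -- degree bound
  have hdeg : ∀ x, (K2.neighborSet x).ncard ≤ (d'+1)^C := by
    intro x
    have hsub : K2.neighborSet x ⊆ {y | G'.dist x y ≤ C} := fun y hy => (hK2edge x y hy).2
    calc (K2.neighborSet x).ncard ≤ ({y | G'.dist x y ≤ C}).ncard :=
        Set.ncard_le_ncard hsub (Set.toFinite _)
      _ ≤ (d'+1)^C := ball_ncard G' hG' d' hd' x C
  -- edge counting
  have hcount : K2.edgeSet.ncard ≤ H.edgeSet.ncard := by
    set pend : Set (Sym2 V) := (fun x => s(x, p x)) '' T with hpenddef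
    set Fo : Set (Sym2 V) := (fun x => s(x, next x)) '' T with hFodef
    have hedges : K2.edgeSet ⊆ K.edgeSet ∪ pend := by
      intro e
      induction e using Sym2.ind with
      | _ x y =>
        intro he
        rw [SimpleGraph.mem_edgeSet] at he
        rcases he with ⟨hT', hadj⟩ | ⟨hx, hy, hK⟩
        · right
          rcases hT' with hx | hy
          · refine ⟨x, hx, ?_⟩
            show s(x, p x) = s(x, y)
            rw [hpUniq x hx y hadj]
          · refine ⟨y, hy, ?_⟩
            show s(y, p y) = s(x, y)
            rw [← hpUniq y hy x hadj.symm]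
            exact Sym2.eq_swap
        · left
          rw [SimpleGraph.mem_edgeSet]
          exact hK
    have hKsub : K.edgeSet ⊆ Sym2.map ρ '' (H.edgeSet \ Fo) := by
      intro e
      induction e using Sym2.ind with
      | _ x y =>
        intro he
        rw [SimpleGraph.mem_edgeSet] at he
        obtain ⟨hne, hx, hy, a, b, hab, ha, hb⟩ := he
        refine ⟨s(a,b), ⟨by rw [SimpleGraph.mem_edgeSet]; exact hab, ?_⟩, by
          rw [Sym2.map_pair_eq, ha, hb]⟩
        rintro ⟨z, hz, hze⟩
        have : ρ a = ρ b := by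
          rw [Sym2.eq_iff] at hze
          rcases hze with ⟨rfl, rfl⟩ | ⟨h1, h2⟩
          · rw [← hρstep z hz]
          · subst h1; subst h2
            rw [hρstep z hz]
        rw [ha, hb] at this
        exact hne this
    have hFoH : Fo ⊆ H.edgeSet := by
      rintro e ⟨z, hz, rfl⟩
      rw [SimpleGraph.mem_edgeSet]
      exact (hnext z hz).1
    have hFocard : Fo.ncard = T.ncard := by
      rw [hFodef]
      apply Set.ncard_image_of_injOn
      intro x hx y hy hxy
      simp only [Sym2.eq_iff] at hxy
      rcases hxy with ⟨h1, _⟩ | ⟨h1, h2⟩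
      · exact h1
      · exfalso
        have d1 : D (next x) < D x := (hnext x hx).2
        have d2 : D (next y) < D y := (hnext y hy).2
        rw [← h1] at d2
        rw [h2] at d1
        omega
    have hpendcard : pend.ncard ≤ T.ncard := Set.ncard_image_le (Set.toFinite _)
    have hK1 : K.edgeSet.ncard ≤ H.edgeSet.ncard - T.ncard := by
      calc K.edgeSet.ncard ≤ (Sym2.map ρ '' (H.edgeSet \ Fo)).ncard :=
            Set.ncard_le_ncard hKsub (Set.toFinite _)
        _ ≤ (H.edgeSet \ Fo).ncard := Set.ncard_image_le (Set.toFinite _)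
        _ = H.edgeSet.ncard - Fo.ncard := Set.ncard_diff hFoH (Set.toFinite _)
        _ = H.edgeSet.ncard - T.ncard := by rw [hFocard]
    have hTle : T.ncard ≤ H.edgeSet.ncard := by
      rw [← hFocard]
      exact Set.ncard_le_ncard hFoH (Set.toFinite _)
    calc K2.edgeSet.ncard ≤ (K.edgeSet ∪ pend).ncard :=
          Set.ncard_le_ncard hedges (Set.toFinite _)
      _ ≤ K.edgeSet.ncard + pend.ncard := Set.ncard_union_le _ _
      _ ≤ (H.edgeSet.ncard - T.ncard) + T.ncard := add_le_add hK1 hpendcard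
      _ ≤ H.edgeSet.ncard := by omega
  -- symmetric difference condition
  have hsym : ∀ x y, ((K2.Adj x y ∧ ¬ G'.Adj x y) ∨ (G'.Adj x y ∧ ¬ K2.Adj x y)) →
      x ∉ T ∧ y ∉ T := by
    intro x y h
    rcases h with ⟨h1, h2⟩ | ⟨h1, h2⟩
    · rcases h1 with ⟨_, hadj⟩ | ⟨hx, hy, _⟩
      · exact absurd hadj h2
      · exact ⟨hx, hy⟩
    · by_contra hc
      have : x ∈ T ∨ y ∈ T := by tauto
      exact h2 (Or.inl ⟨this, h1⟩)
  exact ⟨K2, hK2conn, hdistKG, hcount, hdeg, hsym⟩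


lemma edge_ncard_le {V : Type*} [Fintype V] (G : SimpleGraph V) (d : ℕ)
    (hd : ∀ x, (G.neighborSet x).ncard ≤ d) :
    G.edgeSet.ncard ≤ d * Nat.card V := by
  classical
  have hdeg : ∀ x : V, G.degree x ≤ d := by
    intro x
    have h : (G.neighborSet x).ncard = G.degree x := by
      rw [← Nat.card_coe_set_eq, Nat.card_eq_fintype_card,
        SimpleGraph.card_neighborSet_eq_degree]
    rw [← h]
    exact hd x
  have h2 : ∑ v : V, G.degree v = 2 * G.edgeFinset.card :=
    SimpleGraph.sum_degrees_eq_twice_card_edges G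
  have h3 : ∑ v : V, G.degree v ≤ Fintype.card V * d := by
    calc ∑ v : V, G.degree v ≤ Finset.univ.card • d :=
          Finset.sum_le_card_nsmul _ _ d (fun x _ => hdeg x)
      _ = Fintype.card V * d := by simp [Finset.card_univ]
  have h4 : G.edgeSet.ncard = G.edgeFinset.card := by
    rw [← Nat.card_coe_set_eq, Nat.card_eq_fintype_card, ← SimpleGraph.edgeFinset_card]
  have h5 : Fintype.card V * d = d * Nat.card V := by
    rw [Nat.card_eq_fintype_card, mul_comm]
  omega


/-- Lemma 1: given `𝒢'` and the sequence `𝒢` obtained by deleting the terminal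
(degree-one) vertices, for every `ε > 0` there is `𝒢'_ε ≃ 𝒢'` with
`e(𝒢'_ε) ≤ c(𝒢') + ε`, all of whose edge changes have both endpoints non-terminal. -/
theorem stmt0 {V : ℕ → Type} (Gs' : GraphSeq V)
    (T : ∀ n, Set (V n))
    (hT : ∀ n, T n = {x : V n | ((Gs'.G n).neighborSet x).ncard = 1})
    (Gs : GraphSeq (fun n => ↥((T n)ᶜ)))
    (hGs : ∀ n, Gs.G n = (Gs'.G n).induce ((T n)ᶜ)) :
    ∀ ε : ℝ, 0 < ε → ∃ Gε : GraphSeq V,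
      Gs'.equivSeq Gε ∧
      Gε.edgeNumber ≤ Gs'.cost + ε ∧
      ∀ n, ∀ x y : V n,
        (((Gε.G n).Adj x y ∧ ¬ (Gs'.G n).Adj x y) ∨
          ((Gs'.G n).Adj x y ∧ ¬ (Gε.G n).Adj x y)) →
        x ∈ (T n)ᶜ ∧ y ∈ (T n)ᶜ := by
  intro ε hε
  classical
  haveI hFin : ∀ n, Finite (V n) := Gs'.finite
  haveI hFt : ∀ n, Fintype (V n) := fun n => Fintype.ofFinite _
  haveI hNe : ∀ n, Nonempty (V n) := fun n => (Gs'.connected n).nonempty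
  have hcardpos : ∀ n, 0 < (Nat.card (V n) : ℝ) := by
    intro n
    have : 0 < Nat.card (V n) := Nat.card_pos
    exact_mod_cast this
  -- the set whose infimum is the cost
  have hSne : {x : ℝ | ∃ Hs : GraphSeq V, Gs'.equivSeq Hs ∧ x = Hs.edgeNumber}.Nonempty := by
    refine ⟨Gs'.edgeNumber, Gs', ⟨1, one_pos, fun n x y => ?_⟩, rfl⟩
    constructor <;> omega
  have hex : ∃ z ∈ {x : ℝ | ∃ Hs : GraphSeq V, Gs'.equivSeq Hs ∧ x = Hs.edgeNumber},
      z < Gs'.cost + ε := by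
    by_cases hbdd : BddBelow {x : ℝ | ∃ Hs : GraphSeq V, Gs'.equivSeq Hs ∧ x = Hs.edgeNumber}
    · refine exists_lt_of_csInf_lt hSne ?_
      have : Gs'.cost = sInf {x : ℝ | ∃ Hs : GraphSeq V, Gs'.equivSeq Hs ∧ x = Hs.edgeNumber} :=
        rfl
      linarith
    · obtain ⟨z, hz, hlt⟩ := (not_bddBelow_iff.mp hbdd) (Gs'.cost + ε)
      exact ⟨z, hz, hlt⟩
  obtain ⟨z, ⟨Hs, ⟨L, hLpos, hLip⟩, rfl⟩, hzlt⟩ := hex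
  -- apply the single-graph construction at every level
  have hmain : ∀ n, ∃ K : SimpleGraph (V n), K.Connected ∧
      (∀ x y, K.dist x y ≤ (L*(2*L+1)) * (Gs'.G n).dist x y ∧
        (Gs'.G n).dist x y ≤ (L*(2*L+1)) * K.dist x y) ∧
      K.edgeSet.ncard ≤ (Hs.G n).edgeSet.ncard ∧
      (∀ x, (K.neighborSet x).ncard ≤ (Gs'.degBound+1)^(L*(2*L+1))) ∧
      (∀ x y, ((K.Adj x y ∧ ¬ (Gs'.G n).Adj x y) ∨
        ((Gs'.G n).Adj x y ∧ ¬ K.Adj x y)) → x ∉ T n ∧ y ∉ T n) := by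
    intro n
    refine main_single (Gs'.G n) (Hs.G n) (T n) ?_ ?_ (Gs'.connected n) (Hs.connected n)
      Gs'.degBound (Gs'.deg_le n) L hLpos (fun x y => hLip n x y)
    · intro x
      rw [hT n]
      exact Iff.rfl
    · have : Nonempty ↥((T n)ᶜ) := (Gs.connected n).nonempty
      exact Set.nonempty_coe_sort.mp this
  choose K hK1 hK2 hK3 hK4 hK5 using hmain
  refine ⟨⟨K, Gs'.finite, hK1, (Gs'.degBound+1)^(L*(2*L+1)), hK4, Gs'.card_tendsto⟩,
    ⟨L*(2*L+1), by positivity, fun n x y => hK2 n x y⟩, ?_, ?_⟩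
  · -- edge number bound
    refine le_trans ?_ (le_of_lt hzlt)
    have hb : ∀ n, (((Hs.G n).edgeSet.ncard : ℝ)) / (Nat.card (V n) : ℝ) ≤ (Hs.degBound : ℝ) := by
      intro n
      rw [div_le_iff₀ (hcardpos n)]
      have h := edge_ncard_le (Hs.G n) Hs.degBound (Hs.deg_le n)
      calc ((Hs.G n).edgeSet.ncard : ℝ) ≤ ((Hs.degBound * Nat.card (V n) : ℕ) : ℝ) := by
            exact_mod_cast h
        _ = (Hs.degBound : ℝ) * (Nat.card (V n) : ℝ) := by push_cast; ring
    have hmono : ∀ n, (((K n).edgeSet.ncard : ℝ)) / (Nat.card (V n) : ℝ) ≤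
        (((Hs.G n).edgeSet.ncard : ℝ)) / (Nat.card (V n) : ℝ) := by
      intro n
      have h : ((K n).edgeSet.ncard : ℝ) ≤ ((Hs.G n).edgeSet.ncard : ℝ) := by
        exact_mod_cast hK3 n
      gcongr
    unfold GraphSeq.edgeNumber
    refine Filter.liminf_le_liminf (Filter.Eventually.of_forall hmono) ?_ ?_
    · refine Filter.isBoundedUnder_of ⟨(0 : ℝ), fun n => ?_⟩
      exact div_nonneg (Nat.cast_nonneg _) (Nat.cast_nonneg _)
    · refine Filter.isCoboundedUnder_ge_of_eventually_le (atTop : Filter ℕ)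
        (x := (Hs.degBound : ℝ)) ?_
      exact Filter.Eventually.of_forall hb
  · intro n x y h
    exact ⟨(hK5 n x y h).1, (hK5 n x y h).2⟩
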